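/- Let d, n be positive natural numbers, a : Fin d → Fin n → Bool, k, k' : Fin n with k ≠ k', and c : Bool. Let g : Fin d → Bool be a forger's guess, and let p' : Fin d → Option (Fin n → Bool) be any forged proof sequence for the outcome ¬c built from g, i.e. p' l = none whenever a l k' = c, and whenever a l k' = ¬c we have p' l = some t for some tuple t : Fin n → Bool with t k' = ¬c and t k = g l. Then the forged proof passes the honest aggregator's consistency check, i.e. P_{c, ¬c}(proofSeq a k c, k, k') = P_{c, ¬c}(p', k, k'), if and only if the guess is correct at every cryptic index: for every l : Fin d with a l k' = ¬c, g l = a l k. (Deterministic core of Theorem 1: a malicious aggregator's forgery goes undetected only if he guesses the hidden bit in position k correctly at every one of the cryptic tuples.) -/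

import Mathlib

/-- The consistent proof sequence built from the bit sequence `a`, the position `k`
and the verification outcome `c`. -/
def proofSeq {d n : ℕ} (a : Fin d → Fin n → Bool) (k : Fin n) (c : Bool) :
    Fin d → Option (Fin n → Bool) :=
  fun l => if a l k = c then some (a l) else none

/-- `P_{x,y}(p, k, k')`: the set of indices of non-cryptic tuples of `p` whose bit
in position `k` equals `x` and whose bit in position `k'` equals `y`. -/
def Pxy {d n : ℕ} (p : Fin d → Option (Fin n → Bool)) (k k' : Fin n) (x y : Bool) :
    Finset (Fin d) :=
  Finset.univ.filter (fun l => ∃ t, p l = some t ∧ t k = x ∧ t k' = y)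

/-- Deterministic core of Theorem 1: a forged proof sequence `p'` for the opposite
outcome `¬c`, built from the forger's guess `g`, passes the honest aggregator's
consistency check if and only if the guess is correct at every cryptic index. -/
theorem forged_proof_passes_iff_guess_correct (d n : ℕ) (hd : 0 < d) (hn : 0 < n)
    (a : Fin d → Fin n → Bool) (k k' : Fin n) (hkk' : k ≠ k') (c : Bool)
    (g : Fin d → Bool) (p' : Fin d → Option (Fin n → Bool))
    (hnone : ∀ l : Fin d, a l k' = c → p' l = none)
    (hsome : ∀ l : Fin d, a l k' = !c →
      ∃ t : Fin n → Bool, p' l = some t ∧ t k' = !c ∧ t k = g l) :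
    Pxy (proofSeq a k c) k k' c (!c) = Pxy p' k k' c (!c) ↔
      ∀ l : Fin d, a l k' = !c → g l = a l k := by
  have key1 : ∀ l, (l ∈ Pxy (proofSeq a k c) k k' c (!c) ↔ (a l k = c ∧ a l k' = !c)) := by
    intro l
    simp only [Pxy, Finset.mem_filter, Finset.mem_univ, true_and]
    simp only [proofSeq]
    constructor
    · rintro ⟨t, ht, h1, h2⟩
      split at ht
      · cases ht; exact ⟨h1, h2⟩
      · simp at ht
    · rintro ⟨h1, h2⟩; exact ⟨a l, by simp [h1], h1, h2⟩
  have key2 : ∀ l, (l ∈ Pxy p' k k' c (!c) ↔ (a l k' = !c ∧ g l = c)) := by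
    intro l
    simp only [Pxy, Finset.mem_filter, Finset.mem_univ, true_and]
    constructor
    · rintro ⟨t, ht, h1, h2⟩
      by_cases h : a l k' = c
      · rw [hnone l h] at ht; simp at ht
      · have ha : a l k' = !c := by cases c <;> simp_all
        obtain ⟨t', ht', h1', h2'⟩ := hsome l ha
        rw [ht'] at ht
        cases ht
        exact ⟨ha, by rw [← h2', h1]⟩
    · rintro ⟨h1, h2⟩
      obtain ⟨t', ht', h1', h2'⟩ := hsome l h1
      exact ⟨t', ht', by rw [h2', h2], h1'⟩
  rw [Finset.ext_iff]
  simp only [key1, key2]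
  constructor
  · intro h l hl
    have := h l
    cases hc : a l k <;> cases hgl : g l <;> cases c <;> simp_all
  · intro h l
    constructor
    · rintro ⟨h1, h2⟩; exact ⟨h2, by rw [h l h2, h1]⟩
    · rintro ⟨h1, h2⟩; exact ⟨by rw [← h l h1, h2], h1⟩
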